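/- With λ_n = ((p²−p)/2) P(χ²(1) ≥ y_n²), y_n = √(4 log p − log log p + y) for fixed y and p → ∞, one has λ_n ≤ ((1 − p^{-1}) √(log p) / (√(2π) y_n)) e^{−y/2}, and consequently λ_n → (1/√(8π)) e^{−y/2} as p → ∞. -/

import Mathlib

open MeasureTheory ProbabilityTheory Filter Real Set

noncomputable section

private lemma exp_deriv_aux (x : ℝ) :
    HasDerivAt (fun x : ℝ => rexp (-x ^ 2 / 2)) (rexp (-x ^ 2 / 2) * (-x)) x := by
  have h1 : HasDerivAt (fun x : ℝ => -x ^ 2 / 2) (-x) x := by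
    have := ((hasDerivAt_pow 2 x).neg.div_const 2)
    refine this.congr_deriv ?_
    norm_num
    ring
  simpa using h1.exp

private lemma integrableOn_exp_sq (t : ℝ) :
    IntegrableOn (fun x : ℝ => rexp (-x ^ 2 / 2)) (Ioi t) := by
  have h1 : (fun x : ℝ => rexp (-x ^ 2 / 2)) = fun x => rexp (-(1/2) * x ^ 2) := by
    ext x; ring_nf
  rw [h1]
  exact (integrable_exp_neg_mul_sq (by norm_num)).integrableOn

private lemma tendsto_exp_sq_zero :
    Tendsto (fun x : ℝ => rexp (-x ^ 2 / 2)) atTop (nhds 0) := by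
  apply Real.tendsto_exp_atBot.comp
  apply Tendsto.atBot_div_const (by norm_num)
  exact tendsto_neg_atBot_iff.mpr (tendsto_pow_atTop (by norm_num))

private lemma integral_mul_exp_sq {t : ℝ} :
    ∫ x in Ioi t, x * rexp (-x ^ 2 / 2) = rexp (-t ^ 2 / 2) := by
  have h := integral_Ioi_of_hasDerivAt_of_tendsto' (a := t) (m := 0)
    (f := fun x : ℝ => -rexp (-x ^ 2 / 2)) (f' := fun x : ℝ => x * rexp (-x ^ 2 / 2))
    (fun x _ => by simpa [mul_comm, Pi.neg_def] using (exp_deriv_aux x).neg) ?_ ?_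
  · simpa using h
  · have h1 : (fun x : ℝ => x * rexp (-x ^ 2 / 2)) = fun x => x * rexp (-(1/2) * x ^ 2) := by
      ext x; ring_nf
    rw [h1]
    exact (integrable_mul_exp_neg_mul_sq (by norm_num)).integrableOn
  · simpa using tendsto_exp_sq_zero.neg

private lemma mills_upper {t : ℝ} (ht : 0 < t) :
    ∫ x in Ioi t, rexp (-x ^ 2 / 2) ≤ t⁻¹ * rexp (-t ^ 2 / 2) := by
  have hInt2 : IntegrableOn (fun x : ℝ => t⁻¹ * (x * rexp (-x ^ 2 / 2))) (Ioi t) := by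
    have h1 : (fun x : ℝ => t⁻¹ * (x * rexp (-x ^ 2 / 2)))
        = fun x => t⁻¹ * (x * rexp (-(1/2) * x ^ 2)) := by ext x; ring_nf
    rw [h1]
    exact ((integrable_mul_exp_neg_mul_sq (by norm_num)).const_mul _).integrableOn
  have h : ∫ x in Ioi t, rexp (-x ^ 2 / 2) ≤ ∫ x in Ioi t, t⁻¹ * (x * rexp (-x ^ 2 / 2)) := by
    apply setIntegral_mono_on (integrableOn_exp_sq t) hInt2 measurableSet_Ioi
    intro x hx
    have hx' : (1 : ℝ) ≤ t⁻¹ * x := by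
      rw [inv_mul_eq_div, le_div_iff₀ ht]
      simpa using (le_of_lt hx)
    have := mul_le_mul_of_nonneg_right hx' (Real.exp_nonneg (-x ^ 2 / 2))
    calc rexp (-x ^ 2 / 2) = 1 * rexp (-x ^ 2 / 2) := by ring
      _ ≤ t⁻¹ * x * rexp (-x ^ 2 / 2) := this
      _ = t⁻¹ * (x * rexp (-x ^ 2 / 2)) := by ring
  rw [integral_const_mul, integral_mul_exp_sq] at h
  exact h

private lemma deriv_lower_aux {x : ℝ} (hx : 0 < x) :
    HasDerivAt (fun x : ℝ => ((x ^ 3)⁻¹ - x⁻¹) * rexp (-x ^ 2 / 2))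
      ((1 - 3 * (x ^ 4)⁻¹) * rexp (-x ^ 2 / 2)) x := by
  have h1 : HasDerivAt (fun x : ℝ => (x ^ 3)⁻¹ - x⁻¹)
      (-(↑3 * x ^ 2) / (x ^ 3) ^ 2 - (-(x ^ 2)⁻¹)) x :=
    ((hasDerivAt_pow 3 x).inv (pow_ne_zero _ hx.ne')).sub (hasDerivAt_inv hx.ne')
  have h := h1.mul (exp_deriv_aux x)
  refine h.congr_deriv ?_
  field_simp
  ring

private lemma integrableOn_lower {t : ℝ} (ht : 0 < t) :
    IntegrableOn (fun x : ℝ => (1 - 3 * (x ^ 4)⁻¹) * rexp (-x ^ 2 / 2)) (Ioi t) := by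
  apply Integrable.mono ((integrableOn_exp_sq t).const_mul (1 + 3 * (t ^ 4)⁻¹))
  · apply Measurable.aestronglyMeasurable
    fun_prop
  · filter_upwards [ae_restrict_mem measurableSet_Ioi] with x hx
    have hxt : t ≤ x := le_of_lt hx
    have hx0 : 0 < x := lt_of_lt_of_le ht hxt
    have hinv : (x ^ 4)⁻¹ ≤ (t ^ 4)⁻¹ := by
      apply inv_anti₀ (by positivity)
      exact pow_le_pow_left₀ ht.le hxt 4
    have hpinv : (0:ℝ) < (x ^ 4)⁻¹ := by positivity
    have h5 : |1 - 3 * (x ^ 4)⁻¹| ≤ 1 + 3 * (t ^ 4)⁻¹ := by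
      rw [abs_le]; constructor <;> nlinarith
    rw [Real.norm_eq_abs, Real.norm_eq_abs, abs_mul, abs_of_nonneg (Real.exp_nonneg _),
      abs_of_nonneg (by positivity : (0:ℝ) ≤ (1 + 3 * (t ^ 4)⁻¹) * rexp (-x ^ 2 / 2))]
    exact mul_le_mul_of_nonneg_right h5 (Real.exp_nonneg _)
  

private lemma mills_lower {t : ℝ} (ht : 0 < t) :
    (t⁻¹ - (t ^ 3)⁻¹) * rexp (-t ^ 2 / 2) ≤ ∫ x in Ioi t, rexp (-x ^ 2 / 2) := by
  have key : ∫ x in Ioi t, (1 - 3 * (x ^ 4)⁻¹) * rexp (-x ^ 2 / 2)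
      = (t⁻¹ - (t ^ 3)⁻¹) * rexp (-t ^ 2 / 2) := by
    have h := integral_Ioi_of_hasDerivAt_of_tendsto' (a := t) (m := 0)
      (f := fun x : ℝ => ((x ^ 3)⁻¹ - x⁻¹) * rexp (-x ^ 2 / 2))
      (f' := fun x : ℝ => (1 - 3 * (x ^ 4)⁻¹) * rexp (-x ^ 2 / 2))
      (fun x hx => deriv_lower_aux (lt_of_lt_of_le ht hx)) (integrableOn_lower ht) ?_
    · rw [h]; ring
    · have ha : Tendsto (fun x : ℝ => (x ^ 3)⁻¹) atTop (nhds 0) := by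
        have : Tendsto (fun x : ℝ => x ^ 3) atTop atTop := tendsto_pow_atTop (by norm_num)
        exact this.inv_tendsto_atTop
      have h1 : Tendsto (fun x : ℝ => (x ^ 3)⁻¹ - x⁻¹) atTop (nhds (0 - 0)) :=
        ha.sub tendsto_inv_atTop_zero
      have h2 := h1.mul tendsto_exp_sq_zero
      norm_num at h2
      exact h2
  rw [← key]
  apply setIntegral_mono_on (integrableOn_lower ht) (integrableOn_exp_sq t) measurableSet_Ioi
  intro x hx
  have hx0 : 0 < x := lt_of_lt_of_le ht (le_of_lt hx)
  have : (1 - 3 * (x ^ 4)⁻¹) ≤ 1 := by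
    have : 0 < (x ^ 4)⁻¹ := by positivity
    linarith
  nlinarith [Real.exp_nonneg (-x ^ 2 / 2)]

private lemma gauss_tail {t : ℝ} (ht : 0 < t) :
    ((gaussianReal 0 1) {x : ℝ | t ^ 2 ≤ x ^ 2}).toReal
      = 2 * (Real.sqrt (2 * π))⁻¹ * ∫ x in Ioi t, rexp (-x ^ 2 / 2) := by
  have hpdf : gaussianPDFReal 0 1 = fun x => (Real.sqrt (2 * π))⁻¹ * rexp (-x ^ 2 / 2) := by
    ext x
    simp [gaussianPDFReal]
  have hset : {x : ℝ | t ^ 2 ≤ x ^ 2} = Iic (-t) ∪ Ici t := by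
    ext x
    simp only [mem_setOf_eq, mem_union, mem_Iic, mem_Ici]
    constructor
    · intro h
      have h2 := Real.sqrt_le_sqrt h
      rw [Real.sqrt_sq ht.le, Real.sqrt_sq_eq_abs] at h2
      rcases le_abs.mp h2 with h' | h'
      · right; exact h'
      · left; linarith
    · rintro (h | h) <;> nlinarith
  rw [hset, gaussianReal_apply_eq_integral 0 one_ne_zero,
    ENNReal.toReal_ofReal (setIntegral_nonneg
      ((measurableSet_Iic).union measurableSet_Ici)
      (fun x _ => gaussianPDFReal_nonneg _ _ _)),
    setIntegral_union (Iic_disjoint_Ici.mpr (by linarith)) measurableSet_Ici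
      (integrable_gaussianPDFReal 0 1).integrableOn (integrable_gaussianPDFReal 0 1).integrableOn,
    hpdf]
  have hIic : ∫ x in Iic (-t), (Real.sqrt (2 * π))⁻¹ * rexp (-x ^ 2 / 2)
      = ∫ x in Ioi t, (Real.sqrt (2 * π))⁻¹ * rexp (-x ^ 2 / 2) := by
    rw [← integral_comp_neg_Ioi]
    simp
  rw [hIic, MeasureTheory.integral_Ici_eq_integral_Ioi, MeasureTheory.integral_const_mul]
  ring

private def Af (y : ℝ) (p : ℕ) : ℝ := 4 * Real.log p - Real.log (Real.log p) + y

private def tf (y : ℝ) (p : ℕ) : ℝ := Real.sqrt (Af y p)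

private def ubf (y : ℝ) (p : ℕ) : ℝ :=
  (1 - (p : ℝ)⁻¹) * Real.sqrt (Real.log p) / (Real.sqrt (2 * π) * tf y p) * Real.exp (-y / 2)

private lemma basic_facts {y : ℝ} {p : ℕ} (h1 : 1 ≤ Real.log p) (hy : |y| ≤ Real.log p)
    (hp : 2 ≤ p) :
    2 * Real.log p ≤ Af y p ∧ 0 < tf y p ∧ (tf y p) ^ 2 = Af y p ∧
      rexp (-(tf y p) ^ 2 / 2) = ((p : ℝ) ^ 2)⁻¹ * Real.sqrt (Real.log p) * rexp (-y / 2) := by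
  set L := Real.log p with hL
  have hL0 : 0 < L := lt_of_lt_of_le one_pos h1
  have hlogL : Real.log L ≤ L := (Real.log_le_sub_one_of_pos hL0).trans (by linarith)
  have hyL : -L ≤ y := by
    have := neg_abs_le y
    linarith
  have hA : 2 * L ≤ Af y p := by
    unfold Af
    rw [← hL]
    linarith
  have hApos : 0 < Af y p := by linarith
  have htpos : 0 < tf y p := Real.sqrt_pos.mpr hApos
  have ht2 : (tf y p) ^ 2 = Af y p := Real.sq_sqrt hApos.le
  refine ⟨hA, htpos, ht2, ?_⟩
  have hppos : (0 : ℝ) < p := by positivity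
  have hexpL : rexp L = p := Real.exp_log hppos
  have hsqL : Real.sqrt L = rexp (Real.log L / 2) := by
    have h2 : rexp (Real.log L / 2) ^ 2 = L := by
      rw [sq, ← Real.exp_add, add_halves, Real.exp_log hL0]
    have h3 := Real.sqrt_sq (Real.exp_nonneg (Real.log L / 2))
    exact (congrArg Real.sqrt h2.symm).trans h3
  have hpinv : ((p : ℝ) ^ 2)⁻¹ = rexp (-(2 * L)) := by
    rw [Real.exp_neg]
    congr 1
    rw [two_mul, Real.exp_add, hexpL]
    ring
  rw [ht2, hsqL, hpinv, ← Real.exp_add, ← Real.exp_add]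
  congr 1
  unfold Af
  rw [← hL]
  ring

private lemma lam_bounds {y : ℝ} {p : ℕ} (h1 : 1 ≤ Real.log p) (hy : |y| ≤ Real.log p)
    (hp : 2 ≤ p) :
    ubf y p * (1 - (Af y p)⁻¹)
        ≤ (((p : ℝ) ^ 2 - p) / 2) *
          ((gaussianReal 0 1) {x | Real.sqrt (4 * Real.log p - Real.log (Real.log p) + y) ^ 2
            ≤ x ^ 2}).toReal ∧
      (((p : ℝ) ^ 2 - p) / 2) *
          ((gaussianReal 0 1) {x | Real.sqrt (4 * Real.log p - Real.log (Real.log p) + y) ^ 2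
            ≤ x ^ 2}).toReal ≤ ubf y p := by
  obtain ⟨hA, htpos, ht2, hE⟩ := basic_facts h1 hy hp
  have hL0 : 0 < Real.log p := lt_of_lt_of_le one_pos h1
  have hs : {x : ℝ | Real.sqrt (4 * Real.log p - Real.log (Real.log p) + y) ^ 2 ≤ x ^ 2}
      = {x : ℝ | (tf y p) ^ 2 ≤ x ^ 2} := rfl
  rw [hs, gauss_tail htpos]
  have hppos : (0 : ℝ) < p := by positivity
  have hp1 : (1 : ℝ) ≤ p := by exact_mod_cast Nat.one_le_of_lt hp
  have hsqrt2π : (0 : ℝ) < Real.sqrt (2 * π) := Real.sqrt_pos.mpr (by positivity)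
  have hps : (0 : ℝ) ≤ (p : ℝ) ^ 2 - p := by nlinarith
  have hcoef : (0 : ℝ) ≤ ((p : ℝ) ^ 2 - p) / 2 * (2 * (Real.sqrt (2 * π))⁻¹) := by
    apply mul_nonneg (div_nonneg hps (by norm_num))
    positivity
  constructor
  · have hlow := mills_lower htpos
    have hmul := mul_le_mul_of_nonneg_left hlow hcoef
    calc ubf y p * (1 - (Af y p)⁻¹)
        = ((p : ℝ) ^ 2 - p) / 2 * (2 * (Real.sqrt (2 * π))⁻¹) *
          (((tf y p)⁻¹ - (tf y p ^ 3)⁻¹) * rexp (-tf y p ^ 2 / 2)) := by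
          rw [hE]
          unfold ubf
          rw [← ht2]
          field_simp
      _ ≤ ((p : ℝ) ^ 2 - p) / 2 * (2 * (Real.sqrt (2 * π))⁻¹) *
          ∫ x in Ioi (tf y p), rexp (-x ^ 2 / 2) := hmul
      _ = ((p : ℝ) ^ 2 - p) / 2 *
          (2 * (Real.sqrt (2 * π))⁻¹ * ∫ x in Ioi (tf y p), rexp (-x ^ 2 / 2)) := by ring
  · have hup := mills_upper htpos
    have hmul := mul_le_mul_of_nonneg_left hup hcoef
    calc ((p : ℝ) ^ 2 - p) / 2 *
          (2 * (Real.sqrt (2 * π))⁻¹ * ∫ x in Ioi (tf y p), rexp (-x ^ 2 / 2))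
        = ((p : ℝ) ^ 2 - p) / 2 * (2 * (Real.sqrt (2 * π))⁻¹) *
          ∫ x in Ioi (tf y p), rexp (-x ^ 2 / 2) := by ring
      _ ≤ ((p : ℝ) ^ 2 - p) / 2 * (2 * (Real.sqrt (2 * π))⁻¹) *
          ((tf y p)⁻¹ * rexp (-tf y p ^ 2 / 2)) := hmul
      _ = ubf y p := by
          rw [hE]
          unfold ubf
          field_simp

private lemma hlog_nat : Tendsto (fun p : ℕ => Real.log p) atTop atTop :=
  Real.tendsto_log_atTop.comp tendsto_natCast_atTop_atTop

private lemma hev (y : ℝ) : ∀ᶠ p : ℕ in atTop, 1 ≤ Real.log p ∧ |y| ≤ Real.log p ∧ 2 ≤ p :=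
  (hlog_nat.eventually_ge_atTop 1).and
    ((hlog_nat.eventually_ge_atTop |y|).and (eventually_ge_atTop 2))

private lemma hAtop (y : ℝ) : Tendsto (fun p : ℕ => Af y p) atTop atTop := by
  apply tendsto_atTop_mono' atTop ?_ (hlog_nat.const_mul_atTop (by norm_num : (0:ℝ) < 2))
  filter_upwards [hev y] with p hp
  exact (basic_facts hp.1 hp.2.1 hp.2.2).1

set_option maxHeartbeats 800000 in
private lemma ub_tendsto (y : ℝ) :
    Tendsto (ubf y) atTop (nhds ((1 / Real.sqrt (8 * π)) * Real.exp (-y / 2))) := by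
  have hg : Tendsto (fun u : ℝ => 4 - Real.log u / u + y / u) atTop (nhds (4 - 0 + 0)) := by
    refine (tendsto_const_nhds.sub ?_).add (tendsto_const_nhds.div_atTop tendsto_id)
    exact Real.isLittleO_log_id_atTop.tendsto_div_nhds_zero
  have h4 : Tendsto (fun p : ℕ => Af y p / Real.log p) atTop (nhds 4) := by
    have hc := hg.comp hlog_nat
    norm_num at hc
    apply hc.congr'
    filter_upwards [hev y] with p hp
    have hL0 : (0:ℝ) < Real.log p := lt_of_lt_of_le one_pos hp.1
    simp only [Function.comp]
    unfold Af
    field_simp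
  have hr : Tendsto (fun p : ℕ => Real.log p / Af y p) atTop (nhds (1/4)) := by
    have h5 := h4.inv₀ (by norm_num)
    norm_num only [inv_div] at h5
    exact h5
  have hst : Tendsto (fun p : ℕ => Real.sqrt (Real.log p) / tf y p) atTop (nhds (1/2)) := by
    have hc := (Real.continuous_sqrt.tendsto (1/4 : ℝ)).comp hr
    have hq : Real.sqrt (1/4 : ℝ) = 1/2 := by
      rw [show (1/4 : ℝ) = (1/2)^2 by norm_num, Real.sqrt_sq (by norm_num)]
    rw [hq] at hc
    apply hc.congr'
    filter_upwards [hev y] with p hp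
    have hL0 : (0:ℝ) ≤ Real.log p := zero_le_one.trans hp.1
    simp only [Function.comp]
    rw [Real.sqrt_div hL0]
    rfl
  have hone : Tendsto (fun p : ℕ => 1 - (p : ℝ)⁻¹) atTop (nhds (1 - 0)) :=
    tendsto_const_nhds.sub (tendsto_natCast_atTop_atTop.inv_tendsto_atTop)
  have hmain := (hone.mul hst).mul
    (tendsto_const_nhds (x := ((Real.sqrt (2*π))⁻¹ * Real.exp (-y/2))))
  have hval : ((1 - 0) * (1/2)) * ((Real.sqrt (2*π))⁻¹ * Real.exp (-y/2))
      = (1 / Real.sqrt (8*π)) * Real.exp (-y/2) := by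
    have h8 : Real.sqrt (8*π) = 2 * Real.sqrt (2*π) := by
      rw [show (8:ℝ)*π = 2^2 * (2*π) by ring, Real.sqrt_mul (by positivity),
        Real.sqrt_sq (by norm_num)]
    rw [h8]
    ring
  rw [← hval]
  apply hmain.congr
  intro p
  unfold ubf
  ring

end

open MeasureTheory ProbabilityTheory Filter Real

/-- Computation in the proof of (1.11): the bound on `λ_n` and its limit as `p → ∞`. -/
theorem stmt_12 (y : ℝ)
    (lam : ℕ → ℝ)
    (hlam : ∀ p : ℕ, lam p = (((p : ℝ) ^ 2 - p) / 2) *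
      ((gaussianReal 0 1) {x | Real.sqrt (4 * Real.log p - Real.log (Real.log p) + y) ^ 2
          ≤ x ^ 2}).toReal) :
    (∀ᶠ p : ℕ in atTop,
      lam p ≤ (1 - (p : ℝ)⁻¹) * Real.sqrt (Real.log p)
          / (Real.sqrt (2 * π) * Real.sqrt (4 * Real.log p - Real.log (Real.log p) + y))
          * Real.exp (-y / 2)) ∧
    Tendsto lam atTop (nhds ((1 / Real.sqrt (8 * π)) * Real.exp (-y / 2))) := by
  have hub_eq : ∀ p : ℕ, ubf y p = (1 - (p : ℝ)⁻¹) * Real.sqrt (Real.log p)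
      / (Real.sqrt (2 * π) * Real.sqrt (4 * Real.log p - Real.log (Real.log p) + y))
      * Real.exp (-y / 2) := fun p => rfl
  constructor
  · filter_upwards [hev y] with p hp
    rw [hlam p, ← hub_eq p]
    exact (lam_bounds hp.1 hp.2.1 hp.2.2).2
  · have hub := ub_tendsto y
    have hlb : Tendsto (fun p : ℕ => ubf y p * (1 - (Af y p)⁻¹)) atTop
        (nhds ((1 / Real.sqrt (8 * π)) * Real.exp (-y / 2))) := by
      have hc : Tendsto (fun p : ℕ => 1 - (Af y p)⁻¹) atTop (nhds (1 - 0)) :=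
        tendsto_const_nhds.sub (hAtop y).inv_tendsto_atTop
      have h0 := hub.mul hc
      simpa using h0
    apply tendsto_of_tendsto_of_tendsto_of_le_of_le' hlb hub
    · filter_upwards [hev y] with p hp
      rw [hlam p]
      exact (lam_bounds hp.1 hp.2.1 hp.2.2).1
    · filter_upwards [hev y] with p hp
      rw [hlam p]
      exact (lam_bounds hp.1 hp.2.1 hp.2.2).2
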